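/- Let (Bₙ)ₙ≥₁ be integers with |Bₙ| ≥ 3 for all n. Then for every n, the prototype set condition holds at the second level: the image of the closed unit square under the Hurwitz algorithm satisfies 𝔉₂(-2, 1+iB₁) = the left vertical segment [ -1/2 - i/2, -1/2 + i/2 ), i.e., the cylinder C₂(-2, 1+iB₁) := { z ∈ 𝔉 : a₁(z) = -2, a₂(z) = 1+iB₁ } has empty interior in ℂ. -/

import Mathlib

open Complex

/-- The nearest Gaussian integer to a complex number. -/
noncomputable def nearestGaussianInt (z : ℂ) : ℂ :=
  (⌊z.re + 1/2⌋ : ℤ) + (⌊z.im + 1/2⌋ : ℤ) * Complex.I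

/-- The complex Gauss map (extended by `T 0 = 0`). -/
noncomputable def gaussMap (z : ℂ) : ℂ :=
  if z = 0 then 0 else 1 / z - nearestGaussianInt (1 / z)

/-- The fundamental square 𝔉. -/
def fundSquare : Set ℂ :=
  { w : ℂ | -(1/2) ≤ w.re ∧ w.re < 1/2 ∧ -(1/2) ≤ w.im ∧ w.im < 1/2 }

/-- The level-two cylinder `C₂(-2, 1 + iB₁)`. -/
noncomputable def cyl2 (B₁ : ℤ) : Set ℂ :=
  { z : ℂ | z ∈ fundSquare ∧ z ≠ 0 ∧ nearestGaussianInt (1 / z) = -2 ∧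
      gaussMap z ≠ 0 ∧ nearestGaussianInt (1 / gaussMap z) = 1 + (B₁ : ℂ) * Complex.I }

lemma nGI_re (u : ℂ) : (nearestGaussianInt u).re = (⌊u.re + 1/2⌋ : ℤ) := by
  simp [nearestGaussianInt]

lemma nGI_im (u : ℂ) : (nearestGaussianInt u).im = (⌊u.im + 1/2⌋ : ℤ) := by
  simp [nearestGaussianInt]

lemma floor_half_eq {r : ℝ} {n : ℤ} :
    ⌊r + 1/2⌋ = n ↔ (n:ℝ) - 1/2 ≤ r ∧ r < (n:ℝ) + 1/2 := by
  rw [Int.floor_eq_iff]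
  constructor <;> rintro ⟨h1, h2⟩ <;> constructor <;> push_cast at * <;> linarith


lemma nGI_eq_iff {u : ℂ} {c : ℂ} (a b : ℤ) (hc : c.re = (a:ℝ)) (hc' : c.im = (b:ℝ)) :
    nearestGaussianInt u = c ↔ ⌊u.re + 1/2⌋ = a ∧ ⌊u.im + 1/2⌋ = b := by
  rw [Complex.ext_iff, nGI_re, nGI_im, hc, hc']
  constructor <;> rintro ⟨h1, h2⟩ <;> exact ⟨by exact_mod_cast h1, by exact_mod_cast h2⟩

lemma cyl2_forward (B₁ : ℤ) {z : ℂ} (hz : z ∈ cyl2 B₁) :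
    z.re = -(1/2) ∧ (gaussMap (gaussMap z)).re = -(1/2) ∧
      -(1/2) ≤ (gaussMap (gaussMap z)).im ∧ (gaussMap (gaussMap z)).im < 1/2 := by
  obtain ⟨hF, hz0, h1, hw0, h2⟩ := hz
  set w := gaussMap z with hw
  have hgz : w = 1/z + 2 := by rw [hw, gaussMap, if_neg hz0, h1]; ring
  have e1 := (nGI_eq_iff (-2) 0 (by norm_num) (by norm_num)).mp h1
  have e2 := (nGI_eq_iff 1 B₁ (by simp) (by simp)).mp h2
  have b1 := floor_half_eq.mp e1.1
  have b2 := floor_half_eq.mp e1.2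
  have b3 := floor_half_eq.mp e2.1
  have b4 := floor_half_eq.mp e2.2
  push_cast at b1 b2 b3 b4
  have hare : (1/z).re = w.re - 2 := by rw [hgz]; simp
  have haim : (1/z).im = w.im := by rw [hgz]; simp
  rw [hare] at b1; rw [haim] at b2
  have hz1 : w - 2 = z⁻¹ := by rw [hgz, one_div]; ring
  have hz2 : z = (w - 2)⁻¹ := by rw [hz1, inv_inv]
  have hzre : z.re = (w.re - 2) / ((w.re-2)*(w.re-2) + w.im*w.im) := by
    rw [hz2, Complex.inv_re, Complex.normSq_apply]; simp
  have hN : (0:ℝ) < (w.re-2)*(w.re-2) + w.im*w.im := by nlinarith [b1.2]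
  have hM : (0:ℝ) < w.re*w.re + w.im*w.im := by
    have := Complex.normSq_pos.mpr hw0
    rwa [Complex.normSq_apply] at this
  have hwre : (1/w).re = w.re / (w.re*w.re + w.im*w.im) := by
    rw [one_div, Complex.inv_re, Complex.normSq_apply]
  have hwim : (1/w).im = -w.im / (w.re*w.re + w.im*w.im) := by
    rw [one_div, Complex.inv_im, Complex.normSq_apply]
  rw [hwre] at b3; rw [hwim] at b4
  have hzre1 : -(1/2:ℝ) ≤ (w.re - 2) / ((w.re-2)*(w.re-2) + w.im*w.im) := hzre ▸ hF.1
  have key1 : 2*w.re ≤ w.re*w.re + w.im*w.im := by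
    rw [le_div_iff₀ hN] at hzre1; nlinarith
  have key2 : w.re*w.re + w.im*w.im ≤ 2*w.re := by
    have h3 := b3.1
    rw [le_div_iff₀ hM] at h3; linarith
  have hMa : w.re*w.re + w.im*w.im = 2*w.re := le_antisymm key2 key1
  have hapos : 0 < w.re := by nlinarith
  constructor
  · rw [hzre]
    have hNe : (w.re-2)*(w.re-2) + w.im*w.im = 4 - 2*w.re := by linarith
    rw [hNe, div_eq_iff (ne_of_gt (by linarith : (0:ℝ) < 4 - 2*w.re))]; ring
  · have hg2 : gaussMap w = 1/w - (1 + (B₁:ℂ) * Complex.I) := by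
      rw [gaussMap, if_neg hw0, h2]
    have hre2 : (gaussMap w).re = (1/w).re - 1 := by rw [hg2]; simp
    have him2 : (gaussMap w).im = (1/w).im - B₁ := by rw [hg2]; simp
    refine ⟨?_, ?_, ?_⟩
    · rw [hre2, hwre, hMa]
      have h5 : w.re / (2*w.re) = 1/2 := by
        rw [div_eq_iff (ne_of_gt (by linarith : (0:ℝ) < 2*w.re))]; ring
      rw [h5]; norm_num
    · rw [him2, hwim]; linarith [b4.1]
    · rw [him2, hwim]; linarith [b4.2]

set_option maxHeartbeats 1000000 in
lemma cyl2_backward (B₁ : ℤ) (hB : 3 ≤ |B₁|) {u : ℂ}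
    (hre : u.re = -(1/2)) (him1 : -(1/2) ≤ u.im) (him2 : u.im < 1/2) :
    ∃ z ∈ cyl2 B₁, gaussMap (gaussMap z) = u := by
  set t : ℝ := u.im + B₁ with htdef
  set v : ℂ := u + 1 + (B₁:ℂ) * Complex.I with hvdef
  have hvre : v.re = 1/2 := by simp [hvdef, hre]; norm_num
  have hvim : v.im = t := by simp [hvdef, htdef]
  -- |t| ≥ 5/2
  have hB3 : (3:ℝ) ≤ |(B₁:ℝ)| := by exact_mod_cast hB
  have ht : (5/2:ℝ) ≤ |t| := by
    have h0 := abs_add_le (u.im + (B₁:ℝ)) (-u.im)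
    have h00 : u.im + (B₁:ℝ) + -u.im = (B₁:ℝ) := by ring
    rw [h00, abs_neg] at h0
    have habs : |u.im| ≤ 1/2 := abs_le.mpr ⟨by linarith, by linarith⟩
    have : |t| = |u.im + (B₁:ℝ)| := by rw [htdef]
    linarith
  have ht2 : (25/4:ℝ) ≤ t^2 := by
    have h := mul_le_mul ht ht (by norm_num) (abs_nonneg t)
    rw [abs_mul_abs_self] at h
    nlinarith
  have hv0 : v ≠ 0 := by
    intro h; rw [h] at hvre; simp at hvre
  set w : ℂ := v⁻¹ with hwdef
  have hw0 : w ≠ 0 := inv_ne_zero hv0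
  have hnv : Complex.normSq v = 1/4 + t^2 := by
    rw [Complex.normSq_apply, hvre, hvim]; ring
  have hMpos : (0:ℝ) < 1/4 + t^2 := by positivity
  have hwre : w.re = (1/2) / (1/4 + t^2) := by
    rw [hwdef, Complex.inv_re, hnv, hvre]
  have hwim : w.im = -t / (1/4 + t^2) := by
    rw [hwdef, Complex.inv_im, hnv, hvim]
  -- bounds on w.re, w.im
  have hA1 : 0 < w.re := by rw [hwre]; positivity
  have hA : w.re * (1/4 + t^2) = 1/2 := by
    rw [hwre, div_mul_cancel₀ _ (ne_of_gt hMpos)]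
  have hB' : w.im * (1/4 + t^2) = -t := by
    rw [hwim, div_mul_cancel₀ _ (ne_of_gt hMpos)]
  have hA2 : w.re ≤ 1/13 := by nlinarith
  have hB1 : -(1/2) < w.im := by nlinarith [sq_nonneg (t - 5)]
  have hB2 : w.im < 1/2 := by nlinarith [sq_nonneg (t + 5)]
  -- A²+B² = 2A
  have hns : (w.re*w.re + w.im*w.im) * (1/4 + t^2) = 1 := by
    have h6 : Complex.normSq w = (Complex.normSq v)⁻¹ := by
      rw [hwdef, Complex.normSq_inv]
    rw [hnv] at h6
    rw [← Complex.normSq_apply, h6, inv_mul_cancel₀ (ne_of_gt hMpos)]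
  have hAB : w.re*w.re + w.im*w.im = 2*w.re := by
    have h7 : (1/4 + t^2) * (w.re*w.re + w.im*w.im) = (1/4 + t^2) * (2*w.re) := by
      linear_combination hns - 2*hA
    exact mul_left_cancel₀ (ne_of_gt hMpos) h7
  -- z
  have hζ0 : w - 2 ≠ 0 := by
    intro h
    have : (w - 2).re = 0 := by rw [h]; simp
    simp at this; linarith
  have h1z : 1/((w-2)⁻¹) = w - 2 := by rw [one_div, inv_inv]
  have hζre : (w - 2).re = w.re - 2 := by simp
  have hζim : (w - 2).im = w.im := by simp
  have hnear1 : nearestGaussianInt (w - 2) = -2 := by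
    rw [nGI_eq_iff (-2) 0 (by norm_num) (by norm_num)]
    constructor
    · rw [hζre]; exact floor_half_eq.mpr ⟨by push_cast; linarith, by push_cast; linarith⟩
    · rw [hζim]; exact floor_half_eq.mpr ⟨by push_cast; linarith, by push_cast; linarith⟩
  have hg1 : gaussMap ((w-2)⁻¹) = w := by
    rw [gaussMap, if_neg (inv_ne_zero hζ0), h1z, hnear1]; ring
  have hw1 : 1/w = v := by rw [hwdef, one_div, inv_inv]
  have hnearv : nearestGaussianInt (1/w) = 1 + (B₁:ℂ) * Complex.I := by
    rw [hw1, nGI_eq_iff 1 B₁ (by simp) (by simp)]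
    constructor
    · rw [hvre]; norm_num
    · rw [hvim, htdef, show u.im + (B₁:ℝ) + 1/2 = (B₁:ℝ) + (u.im + 1/2) by ring,
        Int.floor_intCast_add]
      have h8 : ⌊u.im + 1/2⌋ = 0 :=
        floor_half_eq.mpr ⟨by push_cast; linarith, by push_cast; linarith⟩
      rw [h8, add_zero]
  have hNe : Complex.normSq (w - 2) = 4 - 2*w.re := by
    rw [Complex.normSq_apply, hζre, hζim]; linear_combination hAB
  have hNpos : (0:ℝ) < 4 - 2*w.re := by linarith
  have hz_re : ((w-2)⁻¹).re = -(1/2) := by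
    rw [Complex.inv_re, hNe, hζre, div_eq_iff (ne_of_gt hNpos)]; ring
  have hz_im : ((w-2)⁻¹).im = -w.im / (4 - 2*w.re) := by
    rw [Complex.inv_im, hNe, hζim]
  refine ⟨(w - 2)⁻¹, ⟨⟨?_, ?_, ?_, ?_⟩, inv_ne_zero hζ0, ?_, ?_, ?_⟩, ?_⟩
  · rw [hz_re]
  · rw [hz_re]; norm_num
  · rw [hz_im, le_div_iff₀ hNpos]; nlinarith
  · rw [hz_im, div_lt_iff₀ hNpos]; nlinarith
  · rw [h1z]; exact hnear1
  · rw [hg1]; exact hw0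
  · rw [hg1]; exact hnearv
  · rw [hg1, gaussMap, if_neg hw0, hnearv, hw1, hvdef]; ring

/-- For `|B₁| ≥ 3`, the prototype set `𝔉₂(-2, 1+iB₁) = T²[C₂(-2, 1+iB₁)]` is the left
vertical segment `[-1/2 - i/2, -1/2 + i/2)`, and the cylinder has empty interior. -/
theorem stmt_16 (B₁ : ℤ) (hB : 3 ≤ |B₁|) :
    (gaussMap ∘ gaussMap) '' cyl2 B₁ =
      { z : ℂ | z.re = -(1/2) ∧ -(1/2) ≤ z.im ∧ z.im < 1/2 } ∧
    interior (cyl2 B₁) = ∅ := by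
  constructor
  · ext u
    constructor
    · rintro ⟨z, hz, rfl⟩
      obtain ⟨_, h2, h3, h4⟩ := cyl2_forward B₁ hz
      exact ⟨h2, h3, h4⟩
    · rintro ⟨h1, h2, h3⟩
      obtain ⟨z, hz, hzu⟩ := cyl2_backward B₁ hB h1 h2 h3
      exact ⟨z, hz, hzu⟩
  · rw [Set.eq_empty_iff_forall_notMem]
    intro z hz
    obtain ⟨ε, hε, hball⟩ := Metric.isOpen_iff.mp isOpen_interior z hz
    have hz1 : z.re = -(1/2) := (cyl2_forward B₁ (interior_subset hz)).1
    have hz2 : z + (ε/2 : ℝ) ∈ Metric.ball z ε := by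
      rw [Metric.mem_ball, Complex.dist_eq]
      have : z + (ε/2 : ℝ) - z = ((ε/2 : ℝ) : ℂ) := by ring
      rw [this, Complex.norm_real, Real.norm_eq_abs, abs_of_pos (by linarith)]
      linarith
    have hz3 : (z + ((ε/2 : ℝ) : ℂ)).re = -(1/2) :=
      (cyl2_forward B₁ (interior_subset (hball hz2))).1
    simp [Complex.add_re, hz1] at hz3
    linarith
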